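/- arXiv:1702.06920 — 9 statements merged into one kernel-verified Lean document; each statement's English description precedes it below -/
import Mathlib

section
/- The N-Farey map is injective: if a/b and c/d are reduced fractions with gcd(b,N)=gcd(d,N)=1 and |a|,|b|,|c|,|d| ≤ sqrt((N-1)/2), and a·b⁻¹ ≡ c·d⁻¹ (mod N), then a/b = c/d. -/
/-- The `N`-Farey map is injective: if `a/b` and `c/d` are reduced fractions with
denominators coprime to `N`, all of absolute value at most `√((N-1)/2)`
(equivalently `2a² ≤ N-1` etc.), and `a·b⁻¹ ≡ c·d⁻¹ (mod N)`, then `a/b = c/d`. -/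
theorem farey_injective (N : ℕ) (hN : 0 < N) (a b c d : ℤ)
    (hab : Int.gcd a b = 1) (hcd : Int.gcd c d = 1)
    (hbN : Int.gcd b N = 1) (hdN : Int.gcd d N = 1)
    (ha : 2 * a ^ 2 ≤ (N : ℤ) - 1) (hb : 2 * b ^ 2 ≤ (N : ℤ) - 1)
    (hc : 2 * c ^ 2 ≤ (N : ℤ) - 1) (hd : 2 * d ^ 2 ≤ (N : ℤ) - 1)
    (hcong : (a : ZMod N) * (b : ZMod N)⁻¹ = (c : ZMod N) * (d : ZMod N)⁻¹) :
    (a : ℚ) / (b : ℚ) = (c : ℚ) / (d : ℚ) := by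
  rcases eq_or_lt_of_le (Nat.one_le_iff_ne_zero.mpr hN.ne' : 1 ≤ N) with h1 | h1
  · -- N = 1 : everything is 0
    have hN1 : (N : ℤ) = 1 := by exact_mod_cast h1.symm
    have ha0 : a = 0 := by nlinarith [sq_nonneg a]
    have hc0 : c = 0 := by nlinarith [sq_nonneg c]
    simp [ha0, hc0]
  · -- N ≥ 2 : b and d are nonzero
    have hb0 : b ≠ 0 := by
      rintro rfl
      simp [Int.gcd] at hbN
      omega
    have hd0 : d ≠ 0 := by
      rintro rfl
      simp [Int.gcd] at hdN
      omega
    have hunit : ∀ x : ℤ, Int.gcd x N = 1 → IsUnit (x : ZMod N) := by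
      intro x hx
      have hx' : IsUnit ((x.natAbs : ℕ) : ZMod N) :=
        (ZMod.isUnit_iff_coprime _ _).mpr hx
      rcases Int.natAbs_eq x with h | h
      · rw [h, Int.cast_natCast]; exact hx'
      · rw [h, Int.cast_neg, Int.cast_natCast]; exact hx'.neg
    have hbu := hunit b hbN
    have hdu := hunit d hdN
    have hbinv : (b : ZMod N)⁻¹ * b = 1 := ZMod.inv_mul_of_unit _ hbu
    have hdinv : (d : ZMod N)⁻¹ * d = 1 := ZMod.inv_mul_of_unit _ hdu
    have key : ((a * d : ℤ) : ZMod N) = ((c * b : ℤ) : ZMod N) := by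
      push_cast
      linear_combination ((b : ZMod N) * d) * hcong
        - ((a : ZMod N) * d) * hbinv + ((c : ZMod N) * b) * hdinv
    have hdvd : (N : ℤ) ∣ a * d - c * b := by
      have := (ZMod.intCast_eq_intCast_iff' _ _ _).mp key
      exact Int.ModEq.dvd this.symm
    have habs : |a * d - c * b| < N := by
      have h2 : 2 * |a * d| ≤ (N : ℤ) - 1 := by
        rw [abs_mul]
        nlinarith [sq_nonneg (|a| - |d|), sq_abs a, sq_abs d]
      have h3 : 2 * |c * b| ≤ (N : ℤ) - 1 := by
        rw [abs_mul]
        nlinarith [sq_nonneg (|c| - |b|), sq_abs c, sq_abs b]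
      have h4 := abs_sub (a * d) (c * b)
      have h5 : (1 : ℤ) ≤ N := by exact_mod_cast hN
      linarith
    have heq : a * d = c * b := by
      have := Int.eq_zero_of_abs_lt_dvd hdvd habs
      omega
    rw [div_eq_div_iff (by exact_mod_cast hb0) (by exact_mod_cast hd0)]
    exact_mod_cast heq
end

section
/- Any two vectors (x₁,y₁) and (x₂,y₂) in the lattice Λ = ⟨(N,0),(r,1)⟩ ⊂ Z² satisfying x₁²+y₁² < N and x₂²+y₂² < N are collinear, i.e., x₁y₂ - x₂y₁ = 0. -/
/-- Any two vectors `(x₁,y₁)`, `(x₂,y₂)` in the lattice `Λ = ⟨(N,0),(r,1)⟩ ⊂ ℤ²`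
with `x₁²+y₁² < N` and `x₂²+y₂² < N` are collinear: `x₁y₂ - x₂y₁ = 0`. -/
theorem short_lattice_vectors_collinear (N : ℤ) (hN : 0 < N) (r : ℤ)
    (x₁ y₁ x₂ y₂ : ℤ)
    (h₁ : ∃ a b : ℤ, x₁ = a * N + b * r ∧ y₁ = b)
    (h₂ : ∃ a b : ℤ, x₂ = a * N + b * r ∧ y₂ = b)
    (hn₁ : x₁ ^ 2 + y₁ ^ 2 < N) (hn₂ : x₂ ^ 2 + y₂ ^ 2 < N) :
    x₁ * y₂ - x₂ * y₁ = 0 := by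
  obtain ⟨a₁, b₁, hx₁, hy₁⟩ := h₁
  obtain ⟨a₂, b₂, hx₂, hy₂⟩ := h₂
  have hdet : x₁ * y₂ - x₂ * y₁ = N * (a₁ * b₂ - a₂ * b₁) := by
    subst hx₁ hy₁ hx₂ hy₂; ring
  -- Cauchy–Schwarz bound
  have hCS : (x₁ * y₂ - x₂ * y₁) ^ 2 ≤ (x₁ ^ 2 + y₁ ^ 2) * (x₂ ^ 2 + y₂ ^ 2) := by
    nlinarith [sq_nonneg (x₁ * x₂ + y₁ * y₂)]
  have h1 : 0 ≤ x₁ ^ 2 + y₁ ^ 2 := by positivity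
  have h2 : 0 ≤ x₂ ^ 2 + y₂ ^ 2 := by positivity
  have hlt : (x₁ * y₂ - x₂ * y₁) ^ 2 < N ^ 2 := by nlinarith
  rw [hdet] at hlt
  have hk : (a₁ * b₂ - a₂ * b₁) ^ 2 < 1 := by nlinarith [mul_pos hN hN, sq_nonneg (a₁ * b₂ - a₂ * b₁)]
  have : a₁ * b₂ - a₂ * b₁ = 0 := by nlinarith [sq_nonneg (a₁ * b₂ - a₂ * b₁)]
  rw [hdet, this, mul_zero]
end

section
/- Suppose N = N'·M with gcd(N',M)=1, and a,b coprime integers with gcd(b,N')=1, a ≡ b·r (mod N'), and (a²+b²)·M < N'. Then for every vector (x,y) in the lattice Λ = ⟨(N,0),(r,1)⟩ with 0 < x²+y² < N, we have x·b = y·a; in particular if y ≠ 0 then x/y = a/b. -/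
/-- Error-tolerant reconstruction: if `N = N'·M` with `gcd(N',M)=1`,
`gcd(a,b)=1`, `gcd(b,N')=1`, `b ≠ 0`, `a ≡ b·r (mod N')` and `(a²+b²)·M < N'`,
then every vector `(x,y)` of the lattice `Λ = ⟨(N,0),(r,1)⟩` with
`0 < x²+y² < N` satisfies `x·b = y·a`; in particular if `y ≠ 0` then `x/y = a/b`. -/
theorem error_tolerant_reconstruction (N' M N r a b : ℤ)
    (hN' : 0 < N') (hM : 0 < M) (hcop : Int.gcd N' M = 1) (hN : N = N' * M)
    (hab : Int.gcd a b = 1) (hbN' : Int.gcd b N' = 1) (hb : b ≠ 0)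
    (hcong : N' ∣ a - b * r) (hbound : (a ^ 2 + b ^ 2) * M < N') :
    ∀ x y : ℤ, (∃ u v : ℤ, x = u * N + v * r ∧ y = v) →
      0 < x ^ 2 + y ^ 2 → x ^ 2 + y ^ 2 < N →
      x * b = y * a ∧ (y ≠ 0 → (x : ℚ) / (y : ℚ) = (a : ℚ) / (b : ℚ)) := by
  rintro x y ⟨u, v, hx, hy⟩ hpos hlt
  obtain ⟨k, hk⟩ := hcong
  have hdvd : N' ∣ x * b - y * a := by
    subst hx hy hN
    exact ⟨u * M * b - y * k, by linear_combination (-y) * hk⟩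
  have hb2 : 0 < b ^ 2 := by positivity
  have hsq : (x * b - y * a) ^ 2 < N' ^ 2 := by
    nlinarith [sq_nonneg (x * a + y * b), sq_nonneg a, mul_pos hN' hM]
  have habs : |x * b - y * a| < N' := by
    rw [abs_lt]
    constructor <;> nlinarith [hsq]
  have hzero : x * b - y * a = 0 := Int.eq_zero_of_abs_lt_dvd hdvd habs
  have hxy : x * b = y * a := by linarith
  refine ⟨hxy, fun hy0 => ?_⟩
  have hbq : (b : ℚ) ≠ 0 := Int.cast_ne_zero.mpr hb
  have hyq : (y : ℚ) ≠ 0 := Int.cast_ne_zero.mpr hy0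
  field_simp
  exact_mod_cast hxy
end

section
/- Under the assumptions that N = N'·M with gcd(N',M)=1, gcd(a,b)=1, gcd(b,N')=1, a ≡ b·r (mod N'), and (a²+b²)M < N', there exists a nonzero vector (x,y) ∈ Λ = ⟨(N,0),(r,1)⟩ with x²+y² < N (namely (aM,bM)). -/
/-- Under the hypotheses of error-tolerant reconstruction, there exists a
nonzero vector `(x,y)` in the lattice `Λ = ⟨(N,0),(r,1)⟩` with `x²+y² < N`
(namely `(aM, bM)`). -/
theorem short_vector_exists (N' M N r a b : ℤ)
    (hN' : 0 < N') (hM : 0 < M) (hcop : Int.gcd N' M = 1) (hN : N = N' * M)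
    (hab : Int.gcd a b = 1) (hbN' : Int.gcd b N' = 1) (hab0 : ¬(a = 0 ∧ b = 0))
    (hcong : N' ∣ a - b * r) (hbound : (a ^ 2 + b ^ 2) * M < N') :
    ∃ x y : ℤ, (∃ u v : ℤ, x = u * N + v * r ∧ y = v) ∧
      ¬(x = 0 ∧ y = 0) ∧ x ^ 2 + y ^ 2 < N := by
  obtain ⟨k, hk⟩ := hcong
  refine ⟨a * M, b * M, ⟨k, b * M, ?_, rfl⟩, ?_, ?_⟩
  · have : a = b * r + N' * k := by linarith
    rw [this, hN]; ring
  · rintro ⟨hx, hy⟩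
    apply hab0
    constructor
    · rcases mul_eq_zero.mp hx with h | h
      · exact h
      · exact absurd h hM.ne'
    · rcases mul_eq_zero.mp hy with h | h
      · exact h
      · exact absurd h hM.ne'
  · have h1 : (a * M) ^ 2 + (b * M) ^ 2 = (a ^ 2 + b ^ 2) * M * M := by ring
    rw [h1, hN]
    exact mul_lt_mul_of_pos_right hbound hM
end

section
/- If (x,y) is a shortest nonzero vector of the lattice Λ = ⟨(N,0),(r,1)⟩, and the hypotheses N = N'M, gcd(N',M)=1, gcd(a,b)=1, gcd(b,N')=1, a ≡ br (mod N'), (a²+b²)M < N' hold, then gcd(x,y) divides M. -/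
set_option maxHeartbeats 1600000 in
/-- If `(x,y)` is a shortest nonzero vector of the lattice `Λ = ⟨(N,0),(r,1)⟩`,
and `N = N'·M`, `gcd(N',M)=1`, `gcd(a,b)=1`, `gcd(b,N')=1`, `b ≠ 0`,
`a ≡ b·r (mod N')`, `(a²+b²)·M < N'`, then `gcd(x,y)` divides `M`. -/
theorem shortest_vector_gcd_dvd (N' M N r a b x y : ℤ)
    (hN' : 0 < N') (hM : 0 < M) (hcop : Int.gcd N' M = 1) (hN : N = N' * M)
    (hab : Int.gcd a b = 1) (hbN' : Int.gcd b N' = 1) (hb : b ≠ 0)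
    (hcong : N' ∣ a - b * r) (hbound : (a ^ 2 + b ^ 2) * M < N')
    (hmem : ∃ u v : ℤ, x = u * N + v * r ∧ y = v)
    (hne : ¬(x = 0 ∧ y = 0))
    (hshort : ∀ x' y' : ℤ, (∃ u v : ℤ, x' = u * N + v * r ∧ y' = v) →
      ¬(x' = 0 ∧ y' = 0) → x ^ 2 + y ^ 2 ≤ x' ^ 2 + y' ^ 2) :
    (Int.gcd x y : ℤ) ∣ M := by
  obtain ⟨u, v, hx, hy⟩ := hmem
  subst hy
  subst hN
  obtain ⟨c, hc⟩ := hcong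
  have hM0 : (M:ℤ) ≠ 0 := hM.ne'
  have hN'0 : (N':ℤ) ≠ 0 := hN'.ne'
  -- compare with (a*M, b*M) ∈ Λ
  have hle : x ^ 2 + y ^ 2 ≤ (a*M) ^ 2 + (b*M) ^ 2 := by
    apply hshort
    · exact ⟨c, b*M, by linear_combination M * hc, rfl⟩
    · rintro ⟨-, h2⟩
      rcases mul_eq_zero.mp h2 with h | h
      · exact hb h
      · exact hM0 h
  have hdvd : (N':ℤ) ∣ b*x - a*y := ⟨b*u*M - y*c, by linear_combination b*hx - y*hc⟩
  have hsq : (b*x - a*y)^2 < N'^2 := by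
    nlinarith [sq_nonneg (a*x + b*y), sq_nonneg a, sq_nonneg b, sq_nonneg M,
      mul_pos hM hN', hle, hbound, sq_nonneg (a^2+b^2)]
  have habs : |b*x - a*y| < N' := by
    nlinarith [sq_abs (b*x - a*y), abs_nonneg (b*x - a*y), hsq]
  have hkey : b*x - a*y = 0 := Int.eq_zero_of_abs_lt_dvd hdvd habs
  have hba : b ∣ y := by
    have hcp : IsCoprime b a := by
      rw [Int.isCoprime_iff_gcd_eq_one, Int.gcd_comm]; exact hab
    exact hcp.dvd_of_dvd_mul_left ⟨x, by linarith⟩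
  obtain ⟨k, hk⟩ := hba
  have hxk : x = a * k := by
    have h := mul_left_cancel₀ hb (show b * x = b * (a*k) by linear_combination hkey + a*hk)
    exact h
  have hk0 : k ≠ 0 := by
    rintro rfl
    exact hne ⟨by simpa using hxk, by simpa using hk⟩
  have hgcd : Int.gcd x y = k.natAbs := by
    rw [hxk, hk, Int.gcd_mul_right, hab, one_mul]
  rw [hgcd, Int.natAbs_dvd]
  -- the key equation k * c = u * M
  rw [hxk, hk] at hx
  have heq : k * c = u * M := mul_left_cancel₀ hN'0 (by linear_combination -k*hc + hx)
  -- gcd(k,u) = 1 via minimality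
  obtain ⟨k₁, hk₁⟩ := (Int.gcd_dvd_left k u : ((Int.gcd k u : ℤ)) ∣ k)
  obtain ⟨u₁, hu₁⟩ := (Int.gcd_dvd_right k u : ((Int.gcd k u : ℤ)) ∣ u)
  set g : ℤ := (Int.gcd k u : ℤ) with hgdef
  have hg0 : g ≠ 0 := by
    simp only [hgdef, ne_eq, Nat.cast_eq_zero, Int.gcd_eq_zero_iff]
    rintro ⟨h1, -⟩; exact hk0 h1
  have hg1le : 1 ≤ g := by
    have : 0 ≤ g := Nat.cast_nonneg _
    omega
  have hk10 : k₁ ≠ 0 := by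
    rintro rfl; rw [mul_zero] at hk₁; exact hk0 hk₁
  have heq1 : k₁ * c = u₁ * M := mul_left_cancel₀ hg0 (by linear_combination -c*hk₁ + heq + M*hu₁)
  have hle2 : x ^ 2 + y ^ 2 ≤ (a*k₁) ^ 2 + (b*k₁) ^ 2 := by
    apply hshort
    · exact ⟨u₁, b*k₁, by linear_combination k₁*hc + N'*heq1, rfl⟩
    · rintro ⟨-, h2⟩
      rcases mul_eq_zero.mp h2 with h | h
      · exact hb h
      · exact hk10 h
  have hb2 : 1 ≤ b^2 := by
    have h1 : b^2 ≠ 0 := pow_ne_zero 2 hb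
    have h2 : 0 ≤ b^2 := sq_nonneg b
    omega
  have hk12 : 1 ≤ k₁^2 := by
    have h1 : k₁^2 ≠ 0 := pow_ne_zero 2 hk10
    have h2 : 0 ≤ k₁^2 := sq_nonneg k₁
    omega
  have hgeq : g = 1 := by
    have hle2' := hle2
    rw [hxk, hk, hk₁] at hle2'
    have hP : 0 < (a^2+b^2)*k₁^2 := by nlinarith [hb2, hk12, sq_nonneg a]
    have hPg : (a^2+b^2)*k₁^2 * g^2 ≤ (a^2+b^2)*k₁^2 * 1 := by nlinarith [hle2']
    have hgsq : g^2 ≤ 1 := le_of_mul_le_mul_left hPg hP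
    nlinarith
  have hcpku : IsCoprime k u := by
    rw [Int.isCoprime_iff_gcd_eq_one]
    have h : ((Int.gcd k u : ℤ)) = 1 := by rw [← hgdef]; exact hgeq
    exact_mod_cast h
  exact hcpku.dvd_of_dvd_mul_left ⟨c, heq.symm⟩
end

section
/- Let a/b be a reduced fraction in the domain of the N-Farey map (|a|,|b| ≤ sqrt((N-1)/2), gcd(a,b)=1, gcd(b,N)=1), mapping to r mod N. Then (a,b) is, up to sign, the unique primitive vector (x,y) in the lattice Λ = ⟨(N,0),(r,1)⟩ with x²+y² < N whose second coordinate is coprime to N. -/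
/-- Let `a/b` be a reduced fraction in the domain of the `N`-Farey map
(`2a² ≤ N-1`, `2b² ≤ N-1`, `gcd(a,b)=1`, `gcd(b,N)=1`), mapping to `r mod N`
(i.e. `a ≡ b·r (mod N)`). Then `(a,b)` is, up to sign, the unique primitive
vector `(x,y)` of the lattice `Λ = ⟨(N,0),(r,1)⟩` with `x²+y² < N` whose second
coordinate is coprime to `N`. -/
theorem farey_vector_unique_up_to_sign (N : ℤ) (hN : 0 < N) (r a b : ℤ)
    (hab : Int.gcd a b = 1) (hbN : Int.gcd b N = 1)
    (ha : 2 * a ^ 2 ≤ N - 1) (hb : 2 * b ^ 2 ≤ N - 1)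
    (hcong : N ∣ a - b * r) :
    ((∃ u v : ℤ, a = u * N + v * r ∧ b = v) ∧ a ^ 2 + b ^ 2 < N) ∧
    (∀ x y : ℤ, (∃ u v : ℤ, x = u * N + v * r ∧ y = v) →
      Int.gcd x y = 1 → Int.gcd y N = 1 → x ^ 2 + y ^ 2 < N →
      (x = a ∧ y = b) ∨ (x = -a ∧ y = -b)) := by
  obtain ⟨k, hk⟩ := hcong
  constructor
  · constructor
    · exact ⟨k, b, by linarith [hk], rfl⟩
    · nlinarith
  · rintro x y ⟨u, v, hx, hy⟩ hxy hyN hsize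
    -- N divides the cross product a*y - b*x
    have hdvd : N ∣ a * y - b * x := by
      refine ⟨v * k - b * u, ?_⟩
      rw [hx, hy]
      linear_combination v * hk
    -- the cross product is small, hence zero
    have hcross : a * y - b * x = 0 := by
      rcases hdvd with ⟨m, hm⟩
      by_contra h
      have hm0 : m ≠ 0 := by rintro rfl; simp at hm; exact h hm
      have h1 : N ≤ |a * y - b * x| := by
        rw [hm]
        calc N = N * 1 := by ring
        _ ≤ N * |m| := mul_le_mul_of_nonneg_left (Int.one_le_abs hm0) hN.le
        _ = |N * m| := by rw [abs_mul, abs_of_pos hN]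
      have h2 : (a * y - b * x) ^ 2 < N ^ 2 := by
        nlinarith [sq_nonneg (a * x + b * y), sq_nonneg x, sq_nonneg y,
          sq_nonneg a, sq_nonneg b]
      nlinarith [sq_abs (a * y - b * x), abs_nonneg (a * y - b * x)]
    -- Bezout coefficients
    have hco : IsCoprime a b := Int.isCoprime_iff_gcd_eq_one.mpr hab
    obtain ⟨s, t, hst⟩ := hco
    set e := s * x + t * y with he
    have hxe : x = e * a := by
      rw [he]; linear_combination (-t) * hcross - x * hst
    have hye : y = e * b := by
      rw [he]; linear_combination s * hcross - y * hst
    have hge : e.natAbs = 1 := by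
      have : Int.gcd (e * a) (e * b) = e.natAbs * Int.gcd a b := Int.gcd_mul_left e a b
      rw [← hxe, ← hye, hxy, hab, mul_one] at this
      omega
    rcases Int.natAbs_eq_iff.mp hge with h1 | h1
    · left; constructor <;> simp [hxe, hye, h1]
    · right; constructor <;> simp [hxe, hye, h1]
end

section
/- Suppose the set of bad primes is finite. Then the modular reconstruction loop terminates: there exists a finite set P of good primes whose product N' exceeds (a²+b²)·M for any fixed target a/b and any product M of bad primes occurring, so that error-tolerant rational reconstruction returns a/b. -/
/-- If the set of bad primes is finite, the modular reconstruction loop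
terminates: for any fixed reduced fraction `a/b` and any product `M` of bad
primes occurring, there is a finite set `P` of good primes whose product `N'`
satisfies `(a²+b²)·M < N'`, so that error-tolerant rational reconstruction
returns `a/b`. -/
theorem modular_reconstruction_terminates (a b : ℤ) (hab : Int.gcd a b = 1)
    (Bad : Set ℕ) (hBadPrime : ∀ p ∈ Bad, Nat.Prime p) (hBadFin : Bad.Finite) :
    ∀ Q : Finset ℕ, (∀ p ∈ Q, p ∈ Bad) →
      ∃ P : Finset ℕ, (∀ p ∈ P, Nat.Prime p ∧ p ∉ Bad) ∧
        (a ^ 2 + b ^ 2) * (∏ p ∈ Q, (p : ℤ)) < ∏ p ∈ P, (p : ℤ) := by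
  intro Q hQ
  set C : ℤ := (a ^ 2 + b ^ 2) * (∏ p ∈ Q, (p : ℤ)) with hC
  set B : Finset ℕ := hBadFin.toFinset with hB
  set n : ℕ := max (C.toNat + 1) (B.sup id + 1) with hn
  obtain ⟨p, hpn, hp⟩ := Nat.exists_infinite_primes n
  refine ⟨{p}, ?_, ?_⟩
  · intro q hq
    simp only [Finset.mem_singleton] at hq
    subst hq
    refine ⟨hp, fun hmem => ?_⟩
    have : q ∈ B := hBadFin.mem_toFinset.mpr hmem
    have h1 : q ≤ B.sup id := Finset.le_sup (f := id) this
    have h2 : B.sup id + 1 ≤ q := le_trans (le_max_right _ _) hpn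
    omega
  · rw [Finset.prod_singleton]
    have h1 : C.toNat + 1 ≤ p := le_trans (le_max_left _ _) hpn
    have h2 : C ≤ (C.toNat : ℤ) := Int.self_le_toNat C
    have : ((C.toNat : ℤ)) < (p : ℤ) := by exact_mod_cast h1
    linarith
end

section
/- If a prime p does not divide any lead coefficient of a minimal strong Gröbner basis G_Z of the ideal ⟨F⟩ ⊂ Z[X] generated by primitive homogeneous polynomials F, then the reduction of G_Z modulo p is a Gröbner basis of ⟨F_p⟩ ⊂ (Z/p)[X] with the same lead monomials. -/
/-- The lead exponent (lead monomial) of a multivariate polynomial with respect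
to a monomial order: the maximum of its support. (Junk value `0` for `f = 0`.) -/
noncomputable def leadExp {σ : Type*} (m : MonomialOrder σ) {R : Type*} [CommSemiring R]
    (f : MvPolynomial σ R) : σ →₀ ℕ :=
  m.toSyn.symm (f.support.sup fun d => m.toSyn d)

/-- The lead coefficient of a multivariate polynomial with respect to a monomial order. -/
noncomputable def leadCoeff {σ : Type*} (m : MonomialOrder σ) {R : Type*} [CommSemiring R]
    (f : MvPolynomial σ R) : R :=
  f.coeff (leadExp m f)

/-- A polynomial over `ℤ` is primitive if its coefficients have no common
non-unit divisor. -/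
def IsPrimitivePoly {σ : Type*} (f : MvPolynomial σ ℤ) : Prop :=
  ∀ d : ℤ, (∀ u : σ →₀ ℕ, d ∣ f.coeff u) → IsUnit d

/-- `G` is a strong Gröbner basis of `I ⊆ ℤ[X]`: `G ⊆ I` and for every nonzero
`f ∈ I` the lead term of some element of `G` divides the lead term of `f`. -/
def IsStrongGB {σ : Type*} (m : MonomialOrder σ) (G : Finset (MvPolynomial σ ℤ))
    (I : Ideal (MvPolynomial σ ℤ)) : Prop :=
  (∀ g ∈ G, g ∈ I) ∧ ∀ f ∈ I, f ≠ 0 → ∃ g ∈ G, g ≠ 0 ∧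
    leadCoeff m g ∣ leadCoeff m f ∧ ∀ i, leadExp m g i ≤ leadExp m f i

/-- A strong Gröbner basis is minimal if no lead term of one of its elements
divides the lead term of another. -/
def IsMinimalStrongGB {σ : Type*} (m : MonomialOrder σ) (G : Finset (MvPolynomial σ ℤ))
    (I : Ideal (MvPolynomial σ ℤ)) : Prop :=
  IsStrongGB m G I ∧ ∀ g ∈ G, ∀ g' ∈ G, g ≠ g' →
    ¬(leadCoeff m g ∣ leadCoeff m g' ∧ ∀ i, leadExp m g i ≤ leadExp m g' i)

/-- `G` is a Gröbner basis of an ideal `I` over a field: `G ⊆ I` and for every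
nonzero `f ∈ I` the lead monomial of some element of `G` divides that of `f`. -/
def IsGB {σ : Type*} (m : MonomialOrder σ) {K : Type*} [Field K]
    (G : Finset (MvPolynomial σ K)) (I : Ideal (MvPolynomial σ K)) : Prop :=
  (∀ g ∈ G, g ∈ I) ∧ ∀ f ∈ I, f ≠ 0 → ∃ g ∈ G, g ≠ 0 ∧
    ∀ i, leadExp m g i ≤ leadExp m f i

section Aux

open MvPolynomial

variable {σ : Type*} (m : MonomialOrder σ) {R : Type*} [CommSemiring R]

lemma toSyn_leadExp (f : MvPolynomial σ R) :
    m.toSyn (leadExp m f) = f.support.sup fun d => m.toSyn d := by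
  simp [leadExp]

lemma le_leadExp {f : MvPolynomial σ R} {d : σ →₀ ℕ} (hd : d ∈ f.support) :
    m.toSyn d ≤ m.toSyn (leadExp m f) := by
  rw [toSyn_leadExp]; exact Finset.le_sup hd

lemma leadExp_mem_support {f : MvPolynomial σ R} (hf : f ≠ 0) :
    leadExp m f ∈ f.support := by
  obtain ⟨d, hd, he⟩ := Finset.exists_mem_eq_sup f.support
    (Finset.nonempty_iff_ne_empty.mpr (fun h => hf (support_eq_empty.mp h)))
    (fun d => m.toSyn d)
  rw [leadExp, he, AddEquiv.symm_apply_apply]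
  exact hd

lemma leadCoeff_ne_zero {f : MvPolynomial σ R} (hf : f ≠ 0) :
    leadCoeff m f ≠ 0 :=
  MvPolynomial.mem_support_iff.mp (leadExp_mem_support m hf)

lemma leadExp_eq {f : MvPolynomial σ R} {e : σ →₀ ℕ} (h1 : f.coeff e ≠ 0)
    (h2 : ∀ d ∈ f.support, m.toSyn d ≤ m.toSyn e) : leadExp m f = e := by
  have hs : (f.support.sup fun d => m.toSyn d) = m.toSyn e :=
    le_antisymm (Finset.sup_le h2)
      (Finset.le_sup (MvPolynomial.mem_support_iff.mpr h1))
  rw [leadExp, hs, AddEquiv.symm_apply_apply]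

lemma leadExp_monomial_mul [IsDomain R] (δ : σ →₀ ℕ) {c : R} (hc : c ≠ 0)
    {g : MvPolynomial σ R} (hg : g ≠ 0) :
    leadExp m (MvPolynomial.monomial δ c * g) = δ + leadExp m g ∧
    leadCoeff m (MvPolynomial.monomial δ c * g) = c * leadCoeff m g := by
  classical
  have h1 : (MvPolynomial.monomial δ c * g).coeff (δ + leadExp m g)
      = c * leadCoeff m g := coeff_monomial_mul _ _ _ _
  have hne : c * leadCoeff m g ≠ 0 := mul_ne_zero hc (leadCoeff_ne_zero m hg)
  have he : leadExp m (MvPolynomial.monomial δ c * g) = δ + leadExp m g := by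
    apply leadExp_eq
    · rw [h1]; exact hne
    · intro d hd
      have hmem := MvPolynomial.support_mul _ _ hd
      obtain ⟨a, ha, b, hb, rfl⟩ := Finset.mem_add.mp hmem
      have ha' : a = δ := by
        rw [support_monomial] at ha
        simpa [hc] using ha
      subst ha'
      rw [map_add, map_add]
      exact add_le_add le_rfl (le_leadExp m hb)
  exact ⟨he, by rw [leadCoeff, he, h1]⟩

lemma leadExp_sub_lt {h q : MvPolynomial σ ℤ} (he : leadExp m q = leadExp m h)
    (hc : leadCoeff m q = leadCoeff m h) (hne : h - q ≠ 0) :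
    m.toSyn (leadExp m (h - q)) < m.toSyn (leadExp m h) := by
  have mem := leadExp_mem_support m hne
  set d := leadExp m (h - q) with hd_def
  have hd : (h - q).coeff d ≠ 0 := MvPolynomial.mem_support_iff.mp mem
  have hle : m.toSyn d ≤ m.toSyn (leadExp m h) := by
    by_contra hlt
    push_neg at hlt
    have h0 : h.coeff d = 0 := by
      by_contra h0
      exact absurd (le_leadExp m (MvPolynomial.mem_support_iff.mpr h0))
        (not_le.mpr hlt)
    have q0 : q.coeff d = 0 := by
      by_contra q0
      have := le_leadExp m (MvPolynomial.mem_support_iff.mpr q0)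
      rw [he] at this
      exact absurd this (not_le.mpr hlt)
    exact hd (by rw [MvPolynomial.coeff_sub, h0, q0, sub_zero])
  have hne' : d ≠ leadExp m h := by
    intro hEq
    apply hd
    rw [hEq, MvPolynomial.coeff_sub]
    have : q.coeff (leadExp m h) = leadCoeff m h := by
      rw [← hc, leadCoeff, he]
    rw [this, ← leadCoeff, sub_self]
  exact lt_of_le_of_ne hle (fun hEq => hne' (m.toSyn.injective hEq))

lemma leadExp_map_eq {p : ℕ} {g : MvPolynomial σ ℤ}
    (h : ((leadCoeff m g : ℤ) : ZMod p) ≠ 0) :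
    leadExp m (MvPolynomial.map (Int.castRingHom (ZMod p)) g) = leadExp m g ∧
    MvPolynomial.map (Int.castRingHom (ZMod p)) g ≠ 0 := by
  have hco : (MvPolynomial.map (Int.castRingHom (ZMod p)) g).coeff (leadExp m g)
      = ((leadCoeff m g : ℤ) : ZMod p) := by
    rw [MvPolynomial.coeff_map]; rfl
  have hne : MvPolynomial.map (Int.castRingHom (ZMod p)) g ≠ 0 := by
    intro h0
    rw [h0, MvPolynomial.coeff_zero] at hco
    exact h hco.symm
  refine ⟨leadExp_eq m (by rw [hco]; exact h) ?_, hne⟩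
  intro d hd
  exact le_leadExp m (MvPolynomial.support_map_subset _ _ hd)

end Aux

/-- If a prime `p` divides no lead coefficient of a minimal strong Gröbner basis
`G` of the ideal `⟨F⟩ ⊂ ℤ[X]` generated by primitive homogeneous polynomials,
then the reduction of `G` modulo `p` is a Gröbner basis of `⟨F_p⟩ ⊂ (ℤ/p)[X]`
with the same lead monomials. -/
theorem groebner_reduction_mod_good_prime (n : ℕ) (m : MonomialOrder (Fin n))
    (F : Finset (MvPolynomial (Fin n) ℤ))
    (hprim : ∀ f ∈ F, IsPrimitivePoly f)
    (hhom : ∀ f ∈ F, ∃ d, f.IsHomogeneous d)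
    (G : Finset (MvPolynomial (Fin n) ℤ))
    (hG : IsMinimalStrongGB m G (Ideal.span (F : Set (MvPolynomial (Fin n) ℤ))))
    (p : ℕ) (hp : Fact p.Prime)
    (hlc : ∀ g ∈ G, ¬ ((p : ℤ) ∣ leadCoeff m g)) :
    IsGB m (G.image (MvPolynomial.map (Int.castRingHom (ZMod p))))
      (Ideal.span ((F.image (MvPolynomial.map (Int.castRingHom (ZMod p)))) :
        Set (MvPolynomial (Fin n) (ZMod p)))) ∧
    ∀ g ∈ G, leadExp m (MvPolynomial.map (Int.castRingHom (ZMod p)) g) = leadExp m g := by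
  classical
  obtain ⟨⟨hGI, hGB⟩, -⟩ := hG
  set I : Ideal (MvPolynomial (Fin n) ℤ) :=
    Ideal.span (F : Set (MvPolynomial (Fin n) ℤ)) with hI_def
  set πh : MvPolynomial (Fin n) ℤ →+* MvPolynomial (Fin n) (ZMod p) :=
    MvPolynomial.map (Int.castRingHom (ZMod p)) with hπ_def
  -- cast of lead coefficients of G is nonzero
  have hlc' : ∀ g ∈ G, ((leadCoeff m g : ℤ) : ZMod p) ≠ 0 := by
    intro g hg hzero
    exact hlc g hg ((ZMod.intCast_zmod_eq_zero_iff_dvd _ p).mp hzero)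
  have hsurj : Function.Surjective πh :=
    MvPolynomial.map_surjective _ (fun x => by
      obtain ⟨k, hk⟩ := ZMod.intCast_surjective (n := p) x
      exact ⟨k, hk⟩)
  have hspan : Ideal.span
      ((F.image (MvPolynomial.map (Int.castRingHom (ZMod p)))) :
        Set (MvPolynomial (Fin n) (ZMod p))) = Ideal.map πh I := by
    rw [hI_def, Ideal.map_span, Finset.coe_image]
  have hpZ : Prime ((p : ℤ)) := Nat.prime_iff_prime_int.mp hp.out
  -- every nonzero element of the reduced ideal has a preimage in `I`
  -- whose lead coefficient is not divisible by `p`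
  have key : ∀ f ∈ Ideal.map πh I, f ≠ 0 →
      ∃ h ∈ I, πh h = f ∧ ¬ ((p : ℤ) ∣ leadCoeff m h) := by
    intro f hf hf0
    obtain ⟨h0, hh0I, hh0⟩ := (Ideal.mem_map_iff_of_surjective πh hsurj).mp hf
    set S : Set m.syn :=
      {s | ∃ h, h ∈ I ∧ πh h = f ∧ m.toSyn (leadExp m h) = s} with hS_def
    have hSne : S.Nonempty := ⟨_, h0, hh0I, hh0, rfl⟩
    obtain ⟨s, ⟨h, hhI, hhf, rfl⟩, hmin⟩ :=
      WellFounded.has_min (IsWellFounded.wf (r := ((· < ·) : m.syn → m.syn → Prop)))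
        S hSne
    refine ⟨h, hhI, hhf, ?_⟩
    intro hdvd
    have hhne : h ≠ 0 := by
      intro h0'
      rw [h0', map_zero] at hhf
      exact hf0 hhf.symm
    obtain ⟨g, hgG, hg0, ⟨c, hc⟩, hle⟩ := hGB h hhI hhne
    have hpc : (p : ℤ) ∣ c := by
      rw [hc] at hdvd
      rcases hpZ.dvd_mul.mp hdvd with h' | h'
      · exact absurd h' (hlc g hgG)
      · exact h'
    have hcne : c ≠ 0 := by
      intro h0'
      rw [h0', mul_zero] at hc
      exact leadCoeff_ne_zero m hhne hc
    set δ : (Fin n) →₀ ℕ := leadExp m h - leadExp m g with hδ_def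
    have hδ : δ + leadExp m g = leadExp m h := by
      ext i
      simp only [Finsupp.add_apply, hδ_def, Finsupp.tsub_apply]
      exact Nat.sub_add_cancel (hle i)
    set q : MvPolynomial (Fin n) ℤ := MvPolynomial.monomial δ c * g with hq_def
    obtain ⟨hqe, hqc⟩ := leadExp_monomial_mul m δ hcne hg0
    have hqe' : leadExp m q = leadExp m h := by rw [hq_def, hqe, hδ]
    have hqc' : leadCoeff m q = leadCoeff m h := by
      rw [hq_def, hqc, hc, mul_comm]
    have hqI : q ∈ I := Ideal.mul_mem_left _ _ (hGI g hgG)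
    have hπq : πh q = 0 := by
      have : ((c : ℤ) : ZMod p) = 0 :=
        (ZMod.intCast_zmod_eq_zero_iff_dvd _ p).mpr hpc
      rw [hq_def, map_mul]
      have : πh (MvPolynomial.monomial δ c) = 0 := by
        rw [hπ_def, MvPolynomial.map_monomial]
        simp [this]
      rw [this, zero_mul]
    have hπh' : πh (h - q) = f := by rw [map_sub, hπq, sub_zero, hhf]
    have hne' : h - q ≠ 0 := by
      intro h0'
      rw [h0', map_zero] at hπh'
      exact hf0 hπh'.symm
    have hlt := leadExp_sub_lt m hqe' hqc' hne'
    exact hmin _ ⟨h - q, Ideal.sub_mem _ hhI hqI, hπh', rfl⟩ hlt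
  constructor
  · constructor
    · intro g' hg'
      obtain ⟨g, hgG, rfl⟩ := Finset.mem_image.mp hg'
      rw [hspan]
      exact Ideal.mem_map_of_mem _ (hGI g hgG)
    · intro f hf hf0
      rw [hspan] at hf
      obtain ⟨h, hhI, hhf, hnd⟩ := key f hf hf0
      have hhne : h ≠ 0 := by
        intro h0'
        rw [h0', map_zero] at hhf
        exact hf0 hhf.symm
      obtain ⟨g, hgG, hg0, hdvd, hle⟩ := hGB h hhI hhne
      have hcast : ((leadCoeff m h : ℤ) : ZMod p) ≠ 0 := by
        intro h0'
        exact hnd ((ZMod.intCast_zmod_eq_zero_iff_dvd _ p).mp h0')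
      have hf_eq : leadExp m f = leadExp m h := by
        rw [← hhf]
        exact (leadExp_map_eq m hcast).1
      obtain ⟨hge, hgne⟩ := leadExp_map_eq m (hlc' g hgG)
      refine ⟨πh g, Finset.mem_image_of_mem _ hgG, hgne, ?_⟩
      intro i
      rw [hge, hf_eq]
      exact hle i
  · intro g hgG
    exact (leadExp_map_eq m (hlc' g hgG)).1
end

section
/- Let Λ ⊆ Z² be a lattice of index N and v a shortest nonzero vector of Λ with ‖v‖² < N. Then every w ∈ Λ with ‖w‖² < N is an integer multiple of v. -/
lemma aux_index_ker {m : ℕ} (f : (ℤ × ℤ) →+ ZMod m)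
    (hf : Function.Surjective f) : f.ker.index = m := by
  rw [AddSubgroup.index_ker, AddMonoidHom.range_eq_top_of_surjective f hf]
  exact (Nat.card_congr AddSubgroup.topEquiv.toEquiv).trans (Nat.card_zmod m)

lemma aux_mem_pair_left {α : Type*} (a b : α) : a ∈ ({a, b} : Set α) := Set.mem_insert _ _
lemma aux_mem_pair_right {α : Type*} (a b : α) : b ∈ ({a, b} : Set α) :=
  Set.mem_insert_of_mem _ rfl

lemma aux_L1 (v2 w2 : ℤ) (hw2 : w2 ≠ 0) :
    (AddSubgroup.closure {((1 : ℤ), v2), ((0 : ℤ), w2)} : AddSubgroup (ℤ × ℤ)).index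
      = w2.natAbs := by
  set m := w2.natAbs with hm
  let f : (ℤ × ℤ) →+ ZMod m :=
    AddMonoidHom.mk' (fun p => (p.2 : ZMod m) - v2 * p.1)
      (by intro a b; simp only [Prod.snd_add, Prod.fst_add]; push_cast; ring)
  have hfapp : ∀ p : ℤ × ℤ, f p = (p.2 : ZMod m) - v2 * p.1 := fun p => rfl
  have hker : (AddSubgroup.closure {((1 : ℤ), v2), ((0 : ℤ), w2)} : AddSubgroup (ℤ × ℤ))
      = f.ker := by
    apply le_antisymm
    · rw [AddSubgroup.closure_le]
      rintro p (rfl | rfl) <;> simp only [SetLike.mem_coe, AddMonoidHom.mem_ker, hfapp]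
      · push_cast; ring
      · have h0 : ((w2 : ℤ) : ZMod m) = 0 := by
          rw [ZMod.intCast_zmod_eq_zero_iff_dvd]
          exact Int.natAbs_dvd.mpr dvd_rfl
        push_cast
        rw [h0]; ring
    · intro p hp
      rw [AddMonoidHom.mem_ker, hfapp] at hp
      have h0 : ((p.2 - v2 * p.1 : ℤ) : ZMod m) = 0 := by push_cast; linear_combination hp
      rw [ZMod.intCast_zmod_eq_zero_iff_dvd, Int.natAbs_dvd] at h0
      obtain ⟨t, ht⟩ := h0
      have hp_eq : p = p.1 • ((1 : ℤ), v2) + t • ((0 : ℤ), w2) := by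
        have h1 : (p.1 • ((1 : ℤ), v2) + t • ((0 : ℤ), w2)).1 = p.1 := by simp
        have h2 : (p.1 • ((1 : ℤ), v2) + t • ((0 : ℤ), w2)).2 = p.2 := by
          simp only [Prod.snd_add, Prod.smul_snd, smul_eq_mul]
          linarith [ht]
        exact (Prod.ext h1.symm h2.symm)
      rw [hp_eq]
      exact add_mem
        (AddSubgroup.zsmul_mem _ (AddSubgroup.subset_closure (aux_mem_pair_left _ _)) _)
        (AddSubgroup.zsmul_mem _ (AddSubgroup.subset_closure (aux_mem_pair_right _ _)) _)
  rw [hker]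
  apply aux_index_ker
  intro z
  refine ⟨(0, z.cast), ?_⟩
  rw [hfapp]
  simp [ZMod.intCast_cast, ZMod.intCast_zmod_cast]

lemma aux_L2 (v1 v2 w2 : ℤ) (hv1 : v1 ≠ 0) (hw2 : w2 ≠ 0) :
    (AddSubgroup.closure {(v1, v2), ((0 : ℤ), w2)} : AddSubgroup (ℤ × ℤ)).index
      = (v1 * w2).natAbs := by
  let g : (ℤ × ℤ) →+ ℤ × ℤ :=
    AddMonoidHom.mk' (fun p => (v1 * p.1, p.2))
      (by intro a b; simp only [Prod.fst_add, Prod.snd_add]; ext <;> simp <;> ring)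
  have hgapp : ∀ p : ℤ × ℤ, g p = (v1 * p.1, p.2) := fun p => rfl
  have hginj : Function.Injective g := by
    intro a b hab
    rw [hgapp, hgapp, Prod.ext_iff] at hab
    exact Prod.ext (mul_left_cancel₀ hv1 hab.1) hab.2
  have hmap : (AddSubgroup.closure {((1 : ℤ), v2), ((0 : ℤ), w2)} : AddSubgroup (ℤ × ℤ)).map g
      = AddSubgroup.closure {(v1, v2), ((0 : ℤ), w2)} := by
    rw [AddMonoidHom.map_closure]
    congr 1
    rw [Set.image_pair, hgapp, hgapp]
    norm_num
  let q : (ℤ × ℤ) →+ ZMod v1.natAbs :=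
    AddMonoidHom.mk' (fun p => (p.1 : ZMod v1.natAbs))
      (by intro a b; simp only [Prod.fst_add]; push_cast; ring)
  have hqapp : ∀ p : ℤ × ℤ, q p = (p.1 : ZMod v1.natAbs) := fun p => rfl
  have hrange : g.range = q.ker := by
    apply le_antisymm
    · rintro p ⟨a, rfl⟩
      rw [AddMonoidHom.mem_ker, hqapp, hgapp]
      rw [ZMod.intCast_zmod_eq_zero_iff_dvd]
      exact Int.natAbs_dvd.mpr (Dvd.intro _ rfl)
    · intro p hp
      rw [AddMonoidHom.mem_ker, hqapp] at hp
      rw [ZMod.intCast_zmod_eq_zero_iff_dvd, Int.natAbs_dvd] at hp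
      obtain ⟨t, ht⟩ := hp
      exact ⟨(t, p.2), by rw [hgapp]; exact Prod.ext ht.symm rfl⟩
  have hrindex : g.range.index = v1.natAbs := by
    rw [hrange]
    apply aux_index_ker
    intro z
    refine ⟨(z.cast, 0), ?_⟩
    rw [hqapp]
    simp [ZMod.intCast_cast, ZMod.intCast_zmod_cast]
  have h := AddSubgroup.index_map_of_injective
    (AddSubgroup.closure {((1 : ℤ), v2), ((0 : ℤ), w2)} : AddSubgroup (ℤ × ℤ)) hginj
  rw [hmap, aux_L1 v2 w2 hw2, hrindex] at h
  rw [h, Int.natAbs_mul]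
  ring

lemma aux_L3 : ∀ n : ℕ, ∀ v w : ℤ × ℤ, w.1.natAbs ≤ n → v.1 * w.2 - v.2 * w.1 ≠ 0 →
    (AddSubgroup.closure {v, w} : AddSubgroup (ℤ × ℤ)).index
      = (v.1 * w.2 - v.2 * w.1).natAbs := by
  intro n
  induction n with
  | zero =>
    intro v w hw hd
    have hw1 : w.1 = 0 := by omega
    have hrw : w = ((0 : ℤ), w.2) := Prod.ext hw1 rfl
    have hv1 : v.1 ≠ 0 := fun h => hd (by rw [h, hw1]; ring)
    have hw2 : w.2 ≠ 0 := fun h => hd (by rw [h, hw1]; ring)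
    have hset : ({v, w} : Set (ℤ × ℤ)) = {(v.1, v.2), ((0 : ℤ), w.2)} := by
      rw [hrw]
    have hde : v.1 * w.2 - v.2 * w.1 = v.1 * w.2 := by rw [hw1]; ring
    rw [hset, hde, aux_L2 v.1 v.2 w.2 hv1 hw2]
  | succ n ih =>
    intro v w hw hd
    by_cases hw1 : w.1 = 0
    · have hrw : w = ((0 : ℤ), w.2) := Prod.ext hw1 rfl
      have hv1 : v.1 ≠ 0 := fun h => hd (by rw [h, hw1]; ring)
      have hw2 : w.2 ≠ 0 := fun h => hd (by rw [h, hw1]; ring)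
      have hset : ({v, w} : Set (ℤ × ℤ)) = {(v.1, v.2), ((0 : ℤ), w.2)} := by
        rw [hrw]
      have hde : v.1 * w.2 - v.2 * w.1 = v.1 * w.2 := by rw [hw1]; ring
      rw [hset, hde, aux_L2 v.1 v.2 w.2 hv1 hw2]
    · set q := v.1 / w.1 with hq
      set v' := v - q • w with hv'
      have hv'1 : v'.1 = v.1 % w.1 := by
        simp only [hv', Prod.fst_sub, Prod.smul_fst, smul_eq_mul]
        rw [Int.emod_def]; ring
      have hmeas : v'.1.natAbs ≤ n := by
        rw [hv'1]
        have h1 : 0 ≤ v.1 % w.1 := Int.emod_nonneg _ hw1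
        have h2 : v.1 % w.1 < |w.1| := by rw [Int.abs_eq_natAbs]; exact Int.emod_lt _ hw1
        have h3 : |w.1| = (w.1.natAbs : ℤ) := Int.abs_eq_natAbs w.1
        omega
      have hceq : (AddSubgroup.closure {v, w} : AddSubgroup (ℤ × ℤ))
          = AddSubgroup.closure {w, v'} := by
        apply le_antisymm <;> rw [AddSubgroup.closure_le]
        · rintro p (rfl | rfl)
          · have hpe : p = v' + q • w := by rw [hv']; abel
            rw [hpe]
            exact add_mem (AddSubgroup.subset_closure (aux_mem_pair_right _ _))
              (AddSubgroup.zsmul_mem _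
                (AddSubgroup.subset_closure (aux_mem_pair_left _ _)) _)
          · exact AddSubgroup.subset_closure (aux_mem_pair_left _ _)
        · rintro p (rfl | rfl)
          · exact AddSubgroup.subset_closure (aux_mem_pair_right _ _)
          · rw [hv']
            exact sub_mem (AddSubgroup.subset_closure (aux_mem_pair_left _ _))
              (AddSubgroup.zsmul_mem _
                (AddSubgroup.subset_closure (aux_mem_pair_right _ _)) _)
      have hd' : w.1 * v'.2 - w.2 * v'.1 ≠ 0 := by
        simp only [hv', Prod.snd_sub, Prod.smul_snd, Prod.fst_sub, Prod.smul_fst, smul_eq_mul]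
        intro h
        exact hd (by linear_combination -h)
      rw [hceq, ih w v' hmeas hd']
      have heq2 : w.1 * v'.2 - w.2 * v'.1 = -(v.1 * w.2 - v.2 * w.1) := by
        simp only [hv', Prod.snd_sub, Prod.smul_snd, Prod.fst_sub, Prod.smul_fst, smul_eq_mul]
        ring
      rw [heq2, Int.natAbs_neg]

lemma aux_primitive (v : ℤ × ℤ) (hv0 : v ≠ 0) :
    ∃ (g : ℤ) (u : ℤ × ℤ), 0 < g ∧ Int.gcd u.1 u.2 = 1 ∧ v.1 = g * u.1 ∧ v.2 = g * u.2 := by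
  have hv12 : v.1 ≠ 0 ∨ v.2 ≠ 0 := by
    by_contra h
    push_neg at h
    exact hv0 (Prod.ext h.1 h.2)
  have hgpos : 0 < Int.gcd v.1 v.2 := Int.gcd_pos_iff.mpr hv12
  refine ⟨(Int.gcd v.1 v.2 : ℤ), (v.1 / (Int.gcd v.1 v.2 : ℤ), v.2 / (Int.gcd v.1 v.2 : ℤ)),
    by exact_mod_cast hgpos, Int.gcd_div_gcd_div_gcd hgpos, ?_, ?_⟩
  · exact (Int.mul_ediv_cancel' (Int.gcd_dvd_left _ _)).symm
  · exact (Int.mul_ediv_cancel' (Int.gcd_dvd_right _ _)).symm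

lemma aux_multiple (u w : ℤ × ℤ) (hcop : Int.gcd u.1 u.2 = 1)
    (hpar : u.1 * w.2 = u.2 * w.1) : ∃ b : ℤ, w.1 = b * u.1 ∧ w.2 = b * u.2 := by
  have hbez : u.1 * Int.gcdA u.1 u.2 + u.2 * Int.gcdB u.1 u.2 = 1 := by
    have h := Int.gcd_eq_gcd_ab u.1 u.2
    rw [hcop] at h
    push_cast at h
    linarith
  refine ⟨Int.gcdA u.1 u.2 * w.1 + Int.gcdB u.1 u.2 * w.2, ?_, ?_⟩
  · linear_combination (-w.1) * hbez + (-(Int.gcdB u.1 u.2)) * hpar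
  · linear_combination (-w.2) * hbez + (Int.gcdA u.1 u.2) * hpar

lemma aux_bezout (g b : ℤ) (hg : g ≠ 0) :
    ∃ G A B : ℤ, 0 < G ∧ G ∣ g ∧ G ∣ b ∧ G = g * A + b * B :=
  ⟨(Int.gcd g b : ℤ), Int.gcdA g b, Int.gcdB g b,
    by exact_mod_cast Int.gcd_pos_iff.mpr (Or.inl hg),
    Int.gcd_dvd_left _ _, Int.gcd_dvd_right _ _, Int.gcd_eq_gcd_ab g b⟩

/-- If `Λ ⊆ ℤ²` is a lattice of index `N` and `v` is a shortest nonzero vector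
of `Λ` with `‖v‖² < N`, then every `w ∈ Λ` with `‖w‖² < N` is an integer
multiple of `v`. -/
theorem short_vectors_multiple_of_shortest (Λ : AddSubgroup (ℤ × ℤ)) (N : ℕ)
    (hidx : Λ.index = N) (hN : 0 < N) (v : ℤ × ℤ) (hv : v ∈ Λ) (hv0 : v ≠ 0)
    (hshort : ∀ u ∈ Λ, u ≠ 0 → v.1 ^ 2 + v.2 ^ 2 ≤ u.1 ^ 2 + u.2 ^ 2)
    (hvn : v.1 ^ 2 + v.2 ^ 2 < (N : ℤ)) :
    ∀ w ∈ Λ, w.1 ^ 2 + w.2 ^ 2 < (N : ℤ) → ∃ k : ℤ, w = k • v := by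
  intro w hw hwn
  by_cases hd : v.1 * w.2 - v.2 * w.1 = 0
  · -- collinear case
    obtain ⟨g, u, hgpos, hcop, hu1, hu2⟩ := aux_primitive v hv0
    have hg0 : g ≠ 0 := ne_of_gt hgpos
    have hpar : u.1 * w.2 = u.2 * w.1 := by
      apply mul_left_cancel₀ hg0
      calc g * (u.1 * w.2) = v.1 * w.2 := by rw [hu1]; ring
        _ = v.2 * w.1 := by linarith [sub_eq_zero.mp hd]
        _ = g * (u.2 * w.1) := by rw [hu2]; ring
    obtain ⟨b, hb1, hb2⟩ := aux_multiple u w hcop hpar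
    obtain ⟨G, A, B, hGpos, hGg, hGb, hGbez⟩ := aux_bezout g b hg0
    have hzmem : A • v + B • w ∈ Λ :=
      add_mem (AddSubgroup.zsmul_mem _ hv A) (AddSubgroup.zsmul_mem _ hw B)
    have hz1 : (A • v + B • w).1 = G * u.1 := by
      simp only [Prod.fst_add, Prod.smul_fst, smul_eq_mul]
      rw [hu1, hb1, hGbez]; ring
    have hz2 : (A • v + B • w).2 = G * u.2 := by
      simp only [Prod.snd_add, Prod.smul_snd, smul_eq_mul]
      rw [hu2, hb2, hGbez]; ring
    have hu0 : u ≠ 0 := by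
      intro h
      apply hv0
      rw [Prod.ext_iff] at h ⊢
      simp only [Prod.fst_zero, Prod.snd_zero] at h ⊢
      exact ⟨by rw [hu1, h.1, mul_zero], by rw [hu2, h.2, mul_zero]⟩
    have hz0 : A • v + B • w ≠ 0 := by
      intro h
      apply hu0
      rw [Prod.ext_iff] at h ⊢
      simp only [Prod.fst_zero, Prod.snd_zero] at h ⊢
      rw [hz1, hz2] at h
      exact ⟨(mul_eq_zero.mp h.1).resolve_left (ne_of_gt hGpos),
        (mul_eq_zero.mp h.2).resolve_left (ne_of_gt hGpos)⟩
    have hmin := hshort _ hzmem hz0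
    rw [hz1, hz2] at hmin
    have hu12 : u.1 ≠ 0 ∨ u.2 ≠ 0 := by
      by_contra hcon
      push_neg at hcon
      exact hu0 (Prod.ext hcon.1 hcon.2)
    have hU : (0 : ℤ) < u.1 ^ 2 + u.2 ^ 2 := by
      rcases hu12 with h | h <;> positivity
    have hmin' : g ^ 2 * (u.1 ^ 2 + u.2 ^ 2) ≤ G ^ 2 * (u.1 ^ 2 + u.2 ^ 2) := by
      calc g ^ 2 * (u.1 ^ 2 + u.2 ^ 2) = v.1 ^ 2 + v.2 ^ 2 := by rw [hu1, hu2]; ring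
        _ ≤ (G * u.1) ^ 2 + (G * u.2) ^ 2 := hmin
        _ = G ^ 2 * (u.1 ^ 2 + u.2 ^ 2) := by ring
    have hg2 : g ^ 2 ≤ G ^ 2 := le_of_mul_le_mul_right hmin' hU
    have hGg' : G ≤ g := Int.le_of_dvd hgpos hGg
    have hgeq : g = G := by nlinarith
    have hgb : g ∣ b := hgeq ▸ hGb
    obtain ⟨k, hk⟩ := hgb
    refine ⟨k, Prod.ext ?_ ?_⟩
    · show w.1 = k * v.1
      rw [hb1, hu1, hk]; ring
    · show w.2 = k * v.2
      rw [hb2, hu2, hk]; ring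
  · -- independent case
    exfalso
    have hle : (AddSubgroup.closure {v, w} : AddSubgroup (ℤ × ℤ)) ≤ Λ := by
      rw [AddSubgroup.closure_le]
      rintro p (rfl | rfl) <;> assumption
    have hdvd : Λ.index ∣ (AddSubgroup.closure {v, w} : AddSubgroup (ℤ × ℤ)).index :=
      AddSubgroup.index_dvd_of_le hle
    rw [hidx, aux_L3 w.1.natAbs v w le_rfl hd] at hdvd
    have hdno : (v.1 * w.2 - v.2 * w.1).natAbs ≠ 0 := by simpa using hd
    have hNle : N ≤ (v.1 * w.2 - v.2 * w.1).natAbs := Nat.le_of_dvd (by omega) hdvd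
    have hcast : (N : ℤ) ≤ |v.1 * w.2 - v.2 * w.1| := by
      rw [Int.abs_eq_natAbs]
      exact_mod_cast hNle
    have h1 : (N : ℤ) * (N : ℤ) ≤ |v.1 * w.2 - v.2 * w.1| * |v.1 * w.2 - v.2 * w.1| :=
      mul_le_mul hcast hcast (by positivity) (abs_nonneg _)
    rw [abs_mul_abs_self] at h1
    have hCS : (v.1 * w.2 - v.2 * w.1) * (v.1 * w.2 - v.2 * w.1)
        ≤ (v.1 ^ 2 + v.2 ^ 2) * (w.1 ^ 2 + w.2 ^ 2) := by
      nlinarith [sq_nonneg (v.1 * w.1 + v.2 * w.2)]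
    have hv_nonneg : (0 : ℤ) ≤ v.1 ^ 2 + v.2 ^ 2 := by positivity
    have hw_nonneg : (0 : ℤ) ≤ w.1 ^ 2 + w.2 ^ 2 := by positivity
    have hNpos : (0 : ℤ) < (N : ℤ) := by exact_mod_cast hN
    have h2 : (v.1 ^ 2 + v.2 ^ 2) * (w.1 ^ 2 + w.2 ^ 2) < (N : ℤ) * (N : ℤ) := by
      calc (v.1 ^ 2 + v.2 ^ 2) * (w.1 ^ 2 + w.2 ^ 2)
          ≤ (v.1 ^ 2 + v.2 ^ 2) * (N : ℤ) :=
            mul_le_mul_of_nonneg_left (le_of_lt hwn) hv_nonneg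
        _ < (N : ℤ) * (N : ℤ) := mul_lt_mul_of_pos_right hvn hNpos
    linarith
end
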